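/- Let G be a group and p a prime such that g^p lies in the commutator subgroup of G for every g ∈ G (i.e., G modulo its commutator subgroup has exponent dividing p). Then for every i ≥ 0 and every g in the i-th term of the lower central series of G, the element g^p lies in the (i+1)-st term of the lower central series. In particular, every quotient of consecutive terms of the lower central series of G is an elementary abelian p-group (it is abelian of exponent dividing p). -/

import Mathlib

open scoped commutatorElement

theorem pow_p_mem_next_lowerCentralSeries (G : Type*) [Group G]
    (p : ℕ) (hp : p.Prime)
    (hexp : ∀ g : G, g ^ p ∈ commutator G) :
    ∀ i : ℕ, ∀ g ∈ (⊤ : Subgroup G).lowerCentralSeries i,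
      g ^ p ∈ (⊤ : Subgroup G).lowerCentralSeries (i + 1) := by
  intro i
  induction i with
  | zero =>
    intro g _
    simpa [commutator_def] using hexp g
  | succ i ih =>
    intro g hg
    set N := (⊤ : Subgroup G).lowerCentralSeries (i + 2) with hNdef
    let π : G →* G ⧸ N := QuotientGroup.mk' N
    have hπ : ∀ x : G, x ∈ N → π x = 1 := fun x hx =>
      (QuotientGroup.eq_one_iff x).mpr hx
    -- elements of (⊤ : Subgroup G).lowerCentralSeries (i+1) become central in G ⧸ N
    have hcen : ∀ z ∈ (⊤ : Subgroup G).lowerCentralSeries (i + 1), ∀ w : G,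
        Commute (π z) (π w) := by
      intro z hz w
      rw [← commutatorElement_eq_one_iff_commute, ← map_commutatorElement]
      exact hπ _ (Subgroup.commutator_mem_commutator hz (Subgroup.mem_top w))
    -- power formula for commutators with left entry in (⊤ : Subgroup G).lowerCentralSeries i
    have key : ∀ n ∈ (⊤ : Subgroup G).lowerCentralSeries i, ∀ c : G, ∀ k : ℕ,
        (π ⁅n, c⁆) ^ k = π ⁅n ^ k, c⁆ := by
      intro n hn c k
      induction k with
      | zero => simp
      | succ k hk =>
        have hmem : ⁅n ^ k, c⁆ ∈ (⊤ : Subgroup G).lowerCentralSeries (i + 1) :=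
          Subgroup.commutator_mem_commutator (pow_mem hn k) (Subgroup.mem_top c)
        have hcomm : Commute (π ⁅n ^ k, c⁆) (π n) := hcen _ hmem n
        have hsplit : π ⁅n ^ (k + 1), c⁆ =
            π n * π ⁅n ^ k, c⁆ * (π n)⁻¹ * π ⁅n, c⁆ := by
          rw [← map_inv, ← map_mul, ← map_mul, ← map_mul]
          congr 1
          simp only [commutatorElement_def, pow_succ, pow_succ']
          group
        rw [hsplit, ← hcomm.eq, mul_assoc, mul_assoc, mul_inv_cancel_left,
          ← hk, pow_succ]
    -- p-th powers of elements of (⊤ : Subgroup G).lowerCentralSeries (i+1) die in G ⧸ N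
    have main : ∀ x ∈ (⊤ : Subgroup G).lowerCentralSeries (i + 1), (π x) ^ p = 1 := by
      intro x hx
      rw [Subgroup.lowerCentralSeries_succ] at hx
      induction hx using Subgroup.closure_induction with
      | mem y hy =>
        obtain ⟨n, hn, c, -, rfl⟩ := hy
        have : (n * c * n⁻¹ * c⁻¹ : G) = ⁅n, c⁆ := rfl
        rw [key n hn c p]
        refine hπ _ ?_
        exact Subgroup.commutator_mem_commutator (ih n hn) (Subgroup.mem_top c)
      | one => simp
      | mul y z hy hz hy' hz' =>
        have hcy : Commute (π y) (π z) := by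
          refine hcen y ?_ z
          rw [Subgroup.lowerCentralSeries_succ]; exact hy
        rw [map_mul, hcy.mul_pow, hy', hz', one_mul]
      | inv y hy hy' =>
        rw [map_inv, inv_pow, hy', inv_one]
    have : π (g ^ p) = 1 := by rw [map_pow]; exact main g hg
    exact (QuotientGroup.eq_one_iff _).mp this
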